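/- Let g be a symmetric positive definite n×n real matrix and B a skew-symmetric n×n real matrix, and G = [[-g⁻¹B, g⁻¹],[g - B g⁻¹ B, B g⁻¹]]. Then the -1-eigenspace of G equals {(X, BX - gX) : X ∈ ℝⁿ}. -/
import Mathlib


open Matrix

theorem generalized_metric_minus_eigenspace {n : ℕ}
    (g B : Matrix (Fin n) (Fin n) ℝ)
    (hg : g.PosDef) (hB : Bᵀ = -B) :
    let G : Matrix (Fin n ⊕ Fin n) (Fin n ⊕ Fin n) ℝ :=
      Matrix.fromBlocks (-(g⁻¹ * B)) g⁻¹ (g - B * g⁻¹ * B) (B * g⁻¹)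
    {v : Fin n ⊕ Fin n → ℝ | G.mulVec v = -v} =
      {v : Fin n ⊕ Fin n → ℝ | ∃ X : Fin n → ℝ, v = Sum.elim X ((B - g).mulVec X)} := by
  intro G
  have hdet : IsUnit g.det := isUnit_iff_ne_zero.mpr (ne_of_gt hg.det_pos)
  have hgi : g⁻¹ * g = 1 := Matrix.nonsing_inv_mul g hdet
  have hig : g * g⁻¹ = 1 := Matrix.mul_nonsing_inv g hdet
  have hM0 : g * -(g⁻¹ * B) = -B := by rw [mul_neg, ← mul_assoc, hig, one_mul]
  have hM1 : -(g⁻¹ * B) + g⁻¹ * (B - g) = (-1 : Matrix (Fin n) (Fin n) ℝ) := by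
    rw [mul_sub, hgi]; abel
  have hM2 : (g - B * g⁻¹ * B) + B * g⁻¹ * (B - g) = -(B - g) := by
    rw [mul_sub, mul_assoc B g⁻¹ g, hgi, mul_one]; abel
  ext v
  simp only [Set.mem_setOf_eq]
  constructor
  · intro h
    set x : Fin n → ℝ := fun i => v (Sum.inl i) with hx
    set y : Fin n → ℝ := fun i => v (Sum.inr i) with hy'
    have hv : v = Sum.elim x y := by funext i; cases i <;> rfl
    rw [hv, Matrix.fromBlocks_mulVec] at h
    have h1 : -(g⁻¹ * B) *ᵥ x + g⁻¹ *ᵥ y = -x := by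
      funext i; exact congrFun h (Sum.inl i)
    have h2 : (g * -(g⁻¹ * B)) *ᵥ x + (g * g⁻¹) *ᵥ y = -(g *ᵥ x) := by
      have := congrArg (g *ᵥ ·) h1
      simpa [Matrix.mulVec_add, Matrix.mulVec_mulVec, Matrix.mulVec_neg] using this
    rw [hM0, hig, Matrix.one_mulVec, Matrix.neg_mulVec] at h2
    have hy : y = (B - g) *ᵥ x := by
      funext i
      have := congrFun h2 i
      simp only [Pi.add_apply, Pi.neg_apply, Matrix.sub_mulVec, Pi.sub_apply] at this ⊢
      linarith
    refine ⟨x, ?_⟩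
    rw [hv, hy]
  · rintro ⟨X, rfl⟩
    rw [Matrix.fromBlocks_mulVec]
    have e1 : -(g⁻¹ * B) *ᵥ X + g⁻¹ *ᵥ ((B - g) *ᵥ X) = -X := by
      rw [Matrix.mulVec_mulVec, ← Matrix.add_mulVec, hM1, Matrix.neg_mulVec,
        Matrix.one_mulVec]
    have e2 : (g - B * g⁻¹ * B) *ᵥ X + (B * g⁻¹) *ᵥ ((B - g) *ᵥ X) = -((B - g) *ᵥ X) := by
      rw [Matrix.mulVec_mulVec, ← Matrix.add_mulVec, hM2, Matrix.neg_mulVec]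
    funext i
    cases i with
    | inl i => exact congrFun e1 i
    | inr i => exact congrFun e2 i
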